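/- If R is a Γ-graded von Neumann regular graded right self-injective ring, then its degree-zero component R_0 is a von Neumann regular right self-injective ring. -/

import Mathlib

/- Setting: `Γ = ι` an additive abelian group, `R` a `ι`-graded ring with identity,
with homogeneous components the additive subgroups `𝒜 γ`. -/

variable {ι R : Type*}

section Defs
variable [DecidableEq ι] [AddCommGroup ι] [Ring R] (𝒜 : ι → AddSubgroup R) [GradedRing 𝒜]

/-- An element of `R` is homogeneous if it lies in some component `𝒜 γ`. -/
def IsHomog (a : R) : Prop := ∃ γ : ι, a ∈ 𝒜 γ

/-- `R` is graded von Neumann regular: every homogeneous element has an inner inverse. -/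
def GradedVNRegular : Prop := ∀ a : R, IsHomog 𝒜 a → ∃ b : R, a * b * a = a

/-- A subset of `R` is a right ideal. -/
def IsRightIdealSet (I : Set R) : Prop :=
  (0 : R) ∈ I ∧ (∀ x ∈ I, ∀ y ∈ I, x + y ∈ I) ∧ ∀ x ∈ I, ∀ r : R, x * r ∈ I

/-- A graded right ideal: a right ideal containing all homogeneous components of
its elements. -/
def IsGradedRightIdeal (I : Set R) : Prop :=
  IsRightIdealSet I ∧ ∀ x ∈ I, ∀ γ : ι, ((DirectSum.decompose 𝒜 x γ : 𝒜 γ) : R) ∈ I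

/-- `A` is graded essential in `B` (as graded right ideals): `A ⊆ B` and every nonzero
graded right ideal contained in `B` meets `A` nontrivially. -/
def GradedEssentialIn (A B : Set R) : Prop :=
  A ⊆ B ∧ ∀ J : Set R, IsGradedRightIdeal 𝒜 J → J ⊆ B → (∃ x ∈ J, x ≠ 0) →
    ∃ x, x ∈ A ∩ J ∧ x ≠ 0

/-- Graded Baer criterion: `R` is graded right self-injective. A homomorphism from a
graded right ideal `I` to `R` is encoded as a function `f : R → R` which is additive on
`I`, right `R`-linear on `I`, and of degree `γ` on `I`. -/
def GradedSelfInjective : Prop :=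
  ∀ I : Set R, IsGradedRightIdeal 𝒜 I → ∀ γ : ι, ∀ f : R → R,
    (∀ x ∈ I, ∀ y ∈ I, f (x + y) = f x + f y) →
    (∀ x ∈ I, ∀ r : R, f (x * r) = f x * r) →
    (∀ δ : ι, ∀ x ∈ I, x ∈ 𝒜 δ → f x ∈ 𝒜 (γ + δ)) →
    ∃ c ∈ 𝒜 γ, ∀ x ∈ I, f x = c * x

/-- The degree-zero component `R₀ = 𝒜 0` is a von Neumann regular ring. -/
def ZeroRegular : Prop := ∀ a ∈ 𝒜 (0 : ι), ∃ b ∈ 𝒜 (0 : ι), a * b * a = a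

/-- A right ideal of the ring `R₀ = 𝒜 0`, encoded as a subset of `R`. -/
def IsRightIdealOfZero (I : Set R) : Prop :=
  I ⊆ (𝒜 (0 : ι) : Set R) ∧ (0 : R) ∈ I ∧ (∀ x ∈ I, ∀ y ∈ I, x + y ∈ I) ∧
    ∀ x ∈ I, ∀ r ∈ 𝒜 (0 : ι), x * r ∈ I

/-- Baer criterion for the ring `R₀ = 𝒜 0`: `R₀` is right self-injective. -/
def ZeroSelfInjective : Prop :=
  ∀ I : Set R, IsRightIdealOfZero 𝒜 I → ∀ f : R → R,
    (∀ x ∈ I, f x ∈ 𝒜 (0 : ι)) →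
    (∀ x ∈ I, ∀ y ∈ I, f (x + y) = f x + f y) →
    (∀ x ∈ I, ∀ r ∈ 𝒜 (0 : ι), f (x * r) = f x * r) →
    ∃ c ∈ 𝒜 (0 : ι), ∀ x ∈ I, f x = c * x

end Defs

section AuxProofs
variable [DecidableEq ι] [AddCommGroup ι] [Ring R] (𝒜 : ι → AddSubgroup R) [GradedRing 𝒜]

open DirectSum

lemma decompL {a b : R} {γ : ι} (ha : a ∈ 𝒜 (0 : ι)) :
    ((DirectSum.decompose 𝒜 (a * b) γ : 𝒜 γ) : R)
      = a * ((DirectSum.decompose 𝒜 b γ : 𝒜 γ) : R) := by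
  have := DirectSum.coe_decompose_mul_add_of_left_mem 𝒜 (b := b) (j := γ) ha
  rwa [zero_add] at this

lemma decompRt {a b : R} {γ : ι} (hb : b ∈ 𝒜 (0 : ι)) :
    ((DirectSum.decompose 𝒜 (a * b) γ : 𝒜 γ) : R)
      = ((DirectSum.decompose 𝒜 a γ : 𝒜 γ) : R) * b := by
  have := DirectSum.coe_decompose_mul_add_of_right_mem 𝒜 (a := a) (i := γ) hb
  rwa [add_zero] at this

lemma zeroRegular_of_graded (hreg : GradedVNRegular 𝒜) : ZeroRegular 𝒜 := by
  intro a ha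
  obtain ⟨b, hb⟩ := hreg a ⟨0, ha⟩
  refine ⟨((DirectSum.decompose 𝒜 b 0 : 𝒜 (0 : ι)) : R), SetLike.coe_mem _, ?_⟩
  have h1 : ((DirectSum.decompose 𝒜 (a * b * a) 0 : 𝒜 (0 : ι)) : R)
      = a * ((DirectSum.decompose 𝒜 b 0 : 𝒜 (0 : ι)) : R) * a := by
    rw [decompRt 𝒜 ha, decompL 𝒜 ha]
  rw [hb, DirectSum.decompose_of_mem_same 𝒜 ha] at h1
  exact h1.symm

variable {𝒜}

/-- In a right ideal of `R₀`, every element has a "local left unit" which is an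
idempotent of the ideal. -/
lemma exists_idem_zero (hreg0 : ZeroRegular 𝒜) {I : Set R} (hI : IsRightIdealOfZero 𝒜 I)
    {x : R} (hx : x ∈ I) : ∃ e ∈ I, e * e = e ∧ e * x = x := by
  obtain ⟨b, hb0, hbx⟩ := hreg0 x (hI.1 hx)
  refine ⟨x * b, hI.2.2.2 x hx b hb0, ?_, hbx⟩
  rw [← mul_assoc, hbx]

/-- From two elements of a right ideal of `R₀`, produce a common left unit. -/
lemma exists_dominator (hreg0 : ZeroRegular 𝒜) {I : Set R} (hI : IsRightIdealOfZero 𝒜 I)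
    {e e' : R} (he : e ∈ I) (he' : e' ∈ I) :
    ∃ g ∈ I, g * e = e ∧ g * e' = e' := by
  have hone : (1 : R) ∈ 𝒜 (0 : ι) := SetLike.one_mem_graded 𝒜
  have hsub : ∀ x ∈ I, ∀ y ∈ I, x - y ∈ I := by
    intro x hx y hy
    have : y * (-1 : R) ∈ I := hI.2.2.2 y hy (-1) ((𝒜 0).neg_mem hone)
    rw [mul_neg_one] at this
    have := hI.2.2.1 x hx _ this
    rwa [← sub_eq_add_neg] at this
  obtain ⟨e₁, he₁I, he₁idem, he₁e⟩ := exists_idem_zero hreg0 hI he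
  obtain ⟨e₂, he₂I, he₂idem, he₂e'⟩ := exists_idem_zero hreg0 hI he'
  set f'' : R := e₂ - e₁ * e₂ with hf''def
  have hf''I : f'' ∈ I := hsub e₂ he₂I _ (hI.2.2.2 e₁ he₁I e₂ (hI.1 he₂I))
  obtain ⟨c, hc0, hcf⟩ := hreg0 f'' (hI.1 hf''I)
  set f' : R := f'' * c with hf'def
  have hf'I : f' ∈ I := hI.2.2.2 f'' hf''I c hc0
  have hf'f'' : f' * f'' = f'' := hcf
  set g : R := e₁ + (f' - f' * e₁) with hgdef
  have hgI : g ∈ I := hI.2.2.1 e₁ he₁I _ (hsub f' hf'I _ (hI.2.2.2 f' hf'I e₁ (hI.1 he₁I)))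
  have hge₁ : g * e₁ = e₁ := by
    rw [hgdef, add_mul, sub_mul, mul_assoc f' e₁ e₁, he₁idem]
    abel
  have hge₂ : g * e₂ = e₂ := by
    have expand : g * e₂ = e₁ * e₂ + (f' * e₂ - f' * (e₁ * e₂)) := by
      rw [hgdef, add_mul, sub_mul, mul_assoc f' e₁ e₂]
    rw [expand, ← mul_sub, ← hf''def, hf'f'', hf''def]
    abel
  refine ⟨g, hgI, ?_, ?_⟩
  · rw [← he₁e, ← mul_assoc, hge₁]
  · rw [← he₂e', ← mul_assoc, hge₂]

lemma zeroSelfInjective_of_graded (hreg : GradedVNRegular 𝒜)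
    (hinj : GradedSelfInjective 𝒜) : ZeroSelfInjective 𝒜 := by
  have hreg0 : ZeroRegular 𝒜 := zeroRegular_of_graded 𝒜 hreg
  intro I hI f hf0 hfadd hflin
  classical
  -- the "graph" of the extension of `f` to the graded right ideal `I * R`
  set gen : Set (R × R) := {p | ∃ x ∈ I, ∃ r : R, p = (x * r, f x * r)} with hgen
  set S : AddSubgroup (R × R) := AddSubgroup.closure gen with hS
  -- key invariant
  have Sinv : ∀ p ∈ S, ∃ e ∈ I, e * p.1 = p.1 ∧ p.2 = f e * p.1 := by
    intro p hp
    induction hp using AddSubgroup.closure_induction with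
    | mem q hq =>
      obtain ⟨x, hx, r, rfl⟩ := hq
      obtain ⟨e, heI, _, hex⟩ := exists_idem_zero hreg0 hI hx
      refine ⟨e, heI, ?_, ?_⟩
      · simp only [← mul_assoc, hex]
      · have : f (e * x) = f e * x := hflin e heI x (hI.1 hx)
        rw [hex] at this
        simp only [this, mul_assoc]
    | zero => exact ⟨0, hI.2.1, by simp⟩
    | add p q hp hq ihp ihq =>
      obtain ⟨e, heI, hep, hfep⟩ := ihp
      obtain ⟨e', he'I, he'q, hfe'q⟩ := ihq
      obtain ⟨g, hgI, hge, hge'⟩ := exists_dominator hreg0 hI heI he'I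
      refine ⟨g, hgI, ?_, ?_⟩
      · show g * (p.1 + q.1) = p.1 + q.1
        rw [mul_add, ← hep, ← he'q, ← mul_assoc, ← mul_assoc, hge, hge', hep, he'q]
      · show p.2 + q.2 = f g * (p.1 + q.1)
        have hfge : f (g * e) = f g * e := hflin g hgI e (hI.1 heI)
        rw [hge] at hfge
        have hfge' : f (g * e') = f g * e' := hflin g hgI e' (hI.1 he'I)
        rw [hge'] at hfge'
        have h1 : f g * p.1 = p.2 := by
          calc f g * p.1 = f g * (e * p.1) := by rw [hep]
            _ = (f g * e) * p.1 := by rw [mul_assoc]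
            _ = f e * p.1 := by rw [← hfge]
            _ = p.2 := hfep.symm
        have h2 : f g * q.1 = q.2 := by
          calc f g * q.1 = f g * (e' * q.1) := by rw [he'q]
            _ = (f g * e') * q.1 := by rw [mul_assoc]
            _ = f e' * q.1 := by rw [← hfge']
            _ = q.2 := hfe'q.symm
        rw [mul_add, h1, h2]
    | neg p hp ihp =>
      obtain ⟨e, heI, hep, hfep⟩ := ihp
      exact ⟨e, heI, by simp [mul_neg, hep], by simp [mul_neg, hfep]⟩
  have unique : ∀ y v v', (y, v) ∈ S → (y, v') ∈ S → v = v' := by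
    intro y v v' h1 h2
    have h3 : ((y, v) - (y, v') : R × R) ∈ S := S.sub_mem h1 h2
    have h4 : (((0 : R), v - v') : R × R) ∈ S := by
      simpa [Prod.sub_def] using h3
    obtain ⟨e, _, _, hfe⟩ := Sinv _ h4
    simp only [mul_zero] at hfe
    exact sub_eq_zero.mp hfe
  -- closure under right multiplication
  have Smul : ∀ p ∈ S, ∀ r : R, ((p.1 * r, p.2 * r) : R × R) ∈ S := by
    intro p hp r
    induction hp using AddSubgroup.closure_induction with
    | mem q hq =>
      obtain ⟨x, hx, s, rfl⟩ := hq
      exact AddSubgroup.subset_closure ⟨x, hx, s * r, by simp [mul_assoc]⟩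
    | zero => convert S.zero_mem using 1; ext <;> simp
    | add p q hp hq ihp ihq =>
      have := S.add_mem ihp ihq
      simpa [add_mul, Prod.add_def] using this
    | neg p hp ihp =>
      simpa [neg_mul] using S.neg_mem ihp
  -- closure under taking homogeneous components
  have Sdec : ∀ p ∈ S, ∀ γ : ι,
      ((((DirectSum.decompose 𝒜 p.1 γ : 𝒜 γ) : R),
        ((DirectSum.decompose 𝒜 p.2 γ : 𝒜 γ) : R)) : R × R) ∈ S := by
    intro p hp γ
    have dadd : ∀ a b : R, ((DirectSum.decompose 𝒜 (a + b) γ : 𝒜 γ) : R)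
        = ((DirectSum.decompose 𝒜 a γ : 𝒜 γ) : R) + ((DirectSum.decompose 𝒜 b γ : 𝒜 γ) : R) := by
      intro a b
      simp only [DirectSum.decompose_add, DirectSum.add_apply, AddSubgroup.coe_add]
    have dneg : ∀ a : R, ((DirectSum.decompose 𝒜 (-a) γ : 𝒜 γ) : R)
        = -((DirectSum.decompose 𝒜 a γ : 𝒜 γ) : R) := by
      intro a
      rw [show (-a : R) = 0 - a by rw [zero_sub], DirectSum.decompose_sub,
        DirectSum.sub_apply]
      simp
    induction hp using AddSubgroup.closure_induction with
    | mem q hq =>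
      obtain ⟨x, hx, s, rfl⟩ := hq
      refine AddSubgroup.subset_closure
        ⟨x, hx, ((DirectSum.decompose 𝒜 s γ : 𝒜 γ) : R), ?_⟩
      have h1 := decompL 𝒜 (b := s) (γ := γ) (hI.1 hx)
      have h2 := decompL 𝒜 (b := s) (γ := γ) (hf0 x hx)
      rw [Prod.mk.injEq]
      exact ⟨h1, h2⟩
    | zero => convert S.zero_mem using 1; ext <;> simp
    | add p q hp hq ihp ihq =>
      have hmem := S.add_mem ihp ihq
      have h1 : (p + q).1 = p.1 + q.1 := rfl
      have h2 : (p + q).2 = p.2 + q.2 := rfl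
      rw [h1, h2, dadd, dadd]
      exact hmem
    | neg p hp ihp =>
      have hmem := S.neg_mem ihp
      have h1 : (-p).1 = -p.1 := rfl
      have h2 : (-p).2 = -p.2 := rfl
      rw [h1, h2, dneg, dneg]
      exact hmem
  -- the graded right ideal and the extension
  set J : Set R := {y | ∃ v, ((y, v) : R × R) ∈ S} with hJ
  set F : R → R := fun y => if h : ∃ v, ((y, v) : R × R) ∈ S then h.choose else 0 with hF
  have memF : ∀ y ∈ J, ((y, F y) : R × R) ∈ S := by
    intro y hy
    obtain ⟨v, hv⟩ := hy
    have : F y = (show ∃ v, ((y, v) : R × R) ∈ S from ⟨v, hv⟩).choose := dif_pos _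
    rw [this]
    exact (show ∃ v, ((y, v) : R × R) ∈ S from ⟨v, hv⟩).choose_spec
  have keyF : ∀ y v, ((y, v) : R × R) ∈ S → F y = v := by
    intro y v hv
    exact unique y (F y) v (memF y ⟨v, hv⟩) hv
  have hJgr : IsGradedRightIdeal 𝒜 J := by
    refine ⟨⟨⟨0, by exact S.zero_mem⟩, ?_, ?_⟩, ?_⟩
    · rintro x ⟨v, hv⟩ y ⟨w, hw⟩
      exact ⟨v + w, by simpa [Prod.add_def] using S.add_mem hv hw⟩
    · rintro x ⟨v, hv⟩ r
      exact ⟨v * r, Smul _ hv r⟩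
    · rintro x ⟨v, hv⟩ γ
      exact ⟨_, Sdec _ hv γ⟩
  obtain ⟨c, hc0, hcF⟩ := hinj J hJgr 0 F
    (by
      intro x hx y hy
      have := S.add_mem (memF x hx) (memF y hy)
      exact keyF _ _ (by simpa [Prod.add_def] using this))
    (by
      intro x hx r
      exact keyF _ _ (Smul _ (memF x hx) r))
    (by
      intro δ x hx hxδ
      have h := Sdec _ (memF x hx) δ
      rw [DirectSum.decompose_of_mem_same 𝒜 hxδ] at h
      have := keyF _ _ h
      rw [zero_add]
      rw [this]
      exact SetLike.coe_mem _)
  refine ⟨c, hc0, ?_⟩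
  intro x hx
  have hxS : ((x, f x) : R × R) ∈ S := by
    have := AddSubgroup.subset_closure (G := R × R) (k := gen)
      (show ((x * 1, f x * 1) : R × R) ∈ gen from ⟨x, hx, 1, rfl⟩)
    simpa using this
  have h1 : F x = f x := keyF _ _ hxS
  have h2 : F x = c * x := hcF x ⟨f x, hxS⟩
  rw [← h1, h2]

end AuxProofs

/-- If `R` is a `Γ`-graded von Neumann regular graded right
self-injective ring, then its degree-zero component `R₀` is a von Neumann regular
right self-injective ring. -/
theorem zero_component_regular_selfInjective
    [DecidableEq ι] [AddCommGroup ι] [Ring R] (𝒜 : ι → AddSubgroup R) [GradedRing 𝒜]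
    (hreg : GradedVNRegular 𝒜) (hinj : GradedSelfInjective 𝒜) :
    ZeroRegular 𝒜 ∧ ZeroSelfInjective 𝒜 :=
  ⟨zeroRegular_of_graded 𝒜 hreg, zeroSelfInjective_of_graded hreg hinj⟩
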